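/- Let q be a prime power and A ≠ B ∈ F_{q³} with N(A) = N(B) = 1, where N is the norm from F_{q³} to F_q, and suppose A^{q+1} ≠ B^{q+1}. Set h(Y,Z) = Y^{q+1} + Y^q Z + Z^{q+1} and X₁ = (−A^{q+1}B + AB^{q+1})/(A^{q+1} − B^{q+1}). Then h(X₁, A) = 0 and h(X₁, B) = 0. -/

import Mathlib

/-- With `h(Y,Z) = Y^{q+1} + Y^q Z + Z^{q+1}` and
`X₁ = (−A^{q+1}B + AB^{q+1})/(A^{q+1} − B^{q+1})`, we have `h(X₁,A) = h(X₁,B) = 0`. -/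
theorem stmt_16 (p k q : ℕ) (hp : Nat.Prime p) (hk : 0 < k) (hq : q = p ^ k)
    (L : Type) [Field L] [Fintype L] (hL : Fintype.card L = q ^ 3)
    (A B : L) (hAB : A ≠ B)
    (hA : A ^ (q ^ 2 + q + 1) = 1) (hB : B ^ (q ^ 2 + q + 1) = 1)
    (hpow : A ^ (q + 1) ≠ B ^ (q + 1))
    (X₁ : L) (hX₁ : X₁ = (-(A ^ (q + 1)) * B + A * B ^ (q + 1)) / (A ^ (q + 1) - B ^ (q + 1))) :
    X₁ ^ (q + 1) + X₁ ^ q * A + A ^ (q + 1) = 0 ∧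
      X₁ ^ (q + 1) + X₁ ^ q * B + B ^ (q + 1) = 0 := by
  haveI := Fact.mk hp
  have hq0 : 0 < q := by
    rw [hq]; exact pow_pos hp.pos k
  have hA0 : A ≠ 0 := by
    intro h
    rw [h, zero_pow (by omega)] at hA
    exact one_ne_zero hA.symm
  have hB0 : B ≠ 0 := by
    intro h
    rw [h, zero_pow (by omega)] at hB
    exact one_ne_zero hB.symm
  have hD : A ^ (q + 1) - B ^ (q + 1) ≠ 0 := sub_ne_zero.mpr hpow
  have hBA : B - A ≠ 0 := sub_ne_zero.mpr (Ne.symm hAB)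
  -- characteristic p
  have hdvd : p ∣ Fintype.card L := by
    rw [hL, hq]
    exact dvd_pow (dvd_pow_self p hk.ne') three_ne_zero
  have hchar0 : CharP L (ringChar L) := ringChar.charP L
  have hcharprime : (ringChar L).Prime := CharP.char_is_prime L (ringChar L)
  have hpc : p ∣ ringChar L := (prime_dvd_char_iff_dvd_card p).mpr hdvd
  have hpe : ringChar L = p := ((Nat.prime_dvd_prime_iff_eq hp hcharprime).mp hpc).symm
  haveI hchar : CharP L p := hpe ▸ hchar0
  have frob : ∀ x y : L, (x + y) ^ q = x ^ q + y ^ q := by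
    intro x y
    rw [hq]
    exact add_pow_char_pow x y p k
  have negpow : ∀ z : L, (-z) ^ q = -(z ^ q) := by
    intro z
    have h1 := frob (-z) z
    rw [neg_add_cancel, zero_pow (by omega)] at h1
    exact eq_neg_of_add_eq_zero_left h1.symm
  have hAinv : (A ^ (q + 1)) ^ q = A⁻¹ := by
    rw [← pow_mul]
    refine eq_inv_of_mul_eq_one_left ?_
    rw [← pow_succ]
    have : (q + 1) * q + 1 = q ^ 2 + q + 1 := by ring
    rw [this, hA]
  have hBinv : (B ^ (q + 1)) ^ q = B⁻¹ := by
    rw [← pow_mul]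
    refine eq_inv_of_mul_eq_one_left ?_
    rw [← pow_succ]
    have : (q + 1) * q + 1 = q ^ 2 + q + 1 := by ring
    rw [this, hB]
  have key : X₁ ^ q = (A ^ (q + 1) - B ^ (q + 1)) / (B - A) := by
    rw [hX₁, div_pow]
    have hnum : (-(A ^ (q + 1)) * B + A * B ^ (q + 1)) ^ q
        = -(A⁻¹ * B ^ q) + A ^ q * B⁻¹ := by
      rw [frob, mul_pow, mul_pow, negpow, hAinv, hBinv, neg_mul]
    have hden : (A ^ (q + 1) - B ^ (q + 1)) ^ q = A⁻¹ - B⁻¹ := by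
      rw [sub_eq_add_neg, frob, negpow, hAinv, hBinv, ← sub_eq_add_neg]
    rw [hnum, hden]
    have hABne : A⁻¹ - B⁻¹ ≠ 0 := by
      rw [sub_ne_zero]
      intro h
      exact hAB (by rw [← inv_inv A, h, inv_inv])
    rw [div_eq_div_iff hABne hBA]
    field_simp
    ring
  constructor
  · rw [pow_succ, key, hX₁]
    field_simp
    ring
  · rw [pow_succ, key, hX₁]
    field_simp
    ring
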